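/- Let a < b be real numbers and let m ∈ L^∞(a,b). Define u(t) := ∫_a^b G(t,s)·m(s) ds, where G(t,s) := (min(t,s) − a)·(b − max(t,s))/(b − a) is the Green function of −d²/dt² with Dirichlet boundary conditions on (a,b) (so that u is the unique solution of −u'' = m on (a,b), u(a) = u(b) = 0). If max{ ∫_a^b (t−a)·m⁻(t) dt, ∫_a^b (b−t)·m⁻(t) dt } < ∫_a^b min(t−a, b−t)·m⁺(t) dt, then u > 0 on (a,b) and there exists c > 0 such that u(t) ≥ c·min(t−a, b−t) for all t ∈ [a,b]. -/

import Mathlib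

open MeasureTheory Real Filter

noncomputable section

theorem stmt5 (a b : ℝ) (hab : a < b) (m : ℝ → ℝ)
    (hm : MemLp m ⊤ (volume.restrict (Set.Ioo a b)))
    (u : ℝ → ℝ)
    (hu : ∀ t, u t = ∫ s in Set.Ioo a b, (min t s - a) * (b - max t s) / (b - a) * m s)
    (hcond :
      max (∫ t in Set.Ioo a b, (t - a) * max (-(m t)) 0)
          (∫ t in Set.Ioo a b, (b - t) * max (-(m t)) 0)
        < ∫ t in Set.Ioo a b, min (t - a) (b - t) * max (m t) 0) :
    (∀ t ∈ Set.Ioo a b, 0 < u t) ∧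
    ∃ c > 0, ∀ t ∈ Set.Icc a b, c * min (t - a) (b - t) ≤ u t := by
  have hba : (0:ℝ) < b - a := sub_pos.mpr hab
  haveI : IsFiniteMeasure (volume.restrict (Set.Ioo a b)) := by
    constructor
    rw [Measure.restrict_apply_univ, Real.volume_Ioo]
    exact ENNReal.ofReal_lt_top
  have hmi : Integrable m (volume.restrict (Set.Ioo a b)) := hm.integrable le_top
  have hmp : Integrable (fun s => max (m s) 0) (volume.restrict (Set.Ioo a b)) := hmi.pos_part
  have hmn : Integrable (fun s => max (-(m s)) 0) (volume.restrict (Set.Ioo a b)) :=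
    hmi.neg.pos_part
  -- weighted integrability helper
  have hwmul : ∀ (w g : ℝ → ℝ), Continuous w → Integrable g (volume.restrict (Set.Ioo a b)) →
      (∀ s ∈ Set.Ioo a b, |w s| ≤ b - a) →
      Integrable (fun s => w s * g s) (volume.restrict (Set.Ioo a b)) := by
    intro w g hw hg hC
    refine (hg.norm.const_mul (b - a)).mono'
      (hw.aestronglyMeasurable.mul hg.aestronglyMeasurable) ?_
    filter_upwards [ae_restrict_mem measurableSet_Ioo] with s hs
    simp only [norm_mul, Real.norm_eq_abs]
    exact mul_le_mul_of_nonneg_right (hC s hs) (abs_nonneg _)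
  have hδcont : Continuous fun s : ℝ => min (s - a) (b - s) :=
    (continuous_id.sub continuous_const).min (continuous_const.sub continuous_id)
  have hδp : Integrable (fun s => min (s - a) (b - s) * max (m s) 0)
      (volume.restrict (Set.Ioo a b)) := by
    refine hwmul _ _ hδcont hmp ?_
    intro s hs
    rw [abs_of_nonneg (le_min (by linarith [hs.1]) (by linarith [hs.2]))]
    exact (min_le_left _ _).trans (by linarith [hs.2])
  have hap : Integrable (fun s => (s - a) * max (-(m s)) 0)
      (volume.restrict (Set.Ioo a b)) := by
    refine hwmul _ _ (continuous_id.sub continuous_const) hmn ?_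
    intro s hs
    rw [abs_of_nonneg (by linarith [hs.1])]
    linarith [hs.2]
  have hbp : Integrable (fun s => (b - s) * max (-(m s)) 0)
      (volume.restrict (Set.Ioo a b)) := by
    refine hwmul _ _ (continuous_const.sub continuous_id) hmn ?_
    intro s hs
    rw [abs_of_nonneg (by linarith [hs.2])]
    linarith [hs.1]
  set Ipos := ∫ t in Set.Ioo a b, min (t - a) (b - t) * max (m t) 0 with hIpos
  set M1 := ∫ t in Set.Ioo a b, (t - a) * max (-(m t)) 0 with hM1
  set M2 := ∫ t in Set.Ioo a b, (b - t) * max (-(m t)) 0 with hM2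
  set c := (Ipos - max M1 M2) / (b - a) with hc
  have hcpos : 0 < c := div_pos (sub_pos.mpr hcond) hba
  have hkey : ∀ t ∈ Set.Icc a b, c * min (t - a) (b - t) ≤ u t := by
    intro t ht
    obtain ⟨hta, htb⟩ := ht
    -- continuity & bound of Green's function in s
    have hGcont : Continuous fun s : ℝ => (min t s - a) * (b - max t s) / (b - a) :=
      (((continuous_const.min continuous_id).sub continuous_const).mul
        (continuous_const.sub (continuous_const.max continuous_id))).div_const _
    have hGfacts : ∀ s ∈ Set.Ioo a b, 0 ≤ min t s - a ∧ min t s - a ≤ b - a ∧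
        0 ≤ b - max t s ∧ b - max t s ≤ b - a := by
      intro s hs
      refine ⟨?_, ?_, ?_, ?_⟩
      · have := le_min hta hs.1.le; linarith
      · have := min_le_left t s; linarith
      · have := max_le htb hs.2.le; linarith
      · have := le_max_left t s; linarith
    have hGbd : ∀ s ∈ Set.Ioo a b, |(min t s - a) * (b - max t s) / (b - a)| ≤ b - a := by
      intro s hs
      obtain ⟨h1, h2, h3, h4⟩ := hGfacts s hs
      rw [abs_of_nonneg (div_nonneg (mul_nonneg h1 h3) hba.le), div_le_iff₀ hba]
      nlinarith
    have hGp : Integrable (fun s => (min t s - a) * (b - max t s) / (b - a) * max (m s) 0)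
        (volume.restrict (Set.Ioo a b)) := hwmul _ _ hGcont hmp hGbd
    have hGn : Integrable (fun s => (min t s - a) * (b - max t s) / (b - a) * max (-(m s)) 0)
        (volume.restrict (Set.Ioo a b)) := hwmul _ _ hGcont hmn hGbd
    -- split u into positive and negative parts
    have hsplit : u t =
        (∫ s in Set.Ioo a b, (min t s - a) * (b - max t s) / (b - a) * max (m s) 0) -
        (∫ s in Set.Ioo a b, (min t s - a) * (b - max t s) / (b - a) * max (-(m s)) 0) := by
      rw [hu t, ← integral_sub hGp hGn]
      refine integral_congr_ae (Eventually.of_forall fun s => ?_)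
      simp only
      linear_combination (-((min t s - a) * (b - max t s) / (b - a))) *
        max_zero_sub_max_neg_zero_eq_self (m s)
    -- lower bound for the positive part
    have hA : min (t - a) (b - t) / (b - a) * Ipos ≤
        ∫ s in Set.Ioo a b, (min t s - a) * (b - max t s) / (b - a) * max (m s) 0 := by
      rw [hIpos, ← integral_const_mul]
      refine setIntegral_mono_on ((hδp.const_mul _)) hGp measurableSet_Ioo ?_
      intro s hs
      have h0 : (0:ℝ) ≤ max (m s) 0 := le_max_right _ _
      rw [← mul_assoc]
      refine mul_le_mul_of_nonneg_right ?_ h0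
      rw [div_mul_eq_mul_div, div_le_div_iff₀ hba hba]
      have hδt1 := min_le_left (t - a) (b - t)
      have hδt2 := min_le_right (t - a) (b - t)
      have hδs1 := min_le_left (s - a) (b - s)
      have hδs2 := min_le_right (s - a) (b - s)
      have hδs0 : (0:ℝ) ≤ min (s - a) (b - s) := le_min (by linarith [hs.1]) (by linarith [hs.2])
      rcases le_total t s with h' | h'
      · rw [min_eq_left h', max_eq_right h']
        nlinarith [mul_le_mul hδt1 hδs2 hδs0 (show (0:ℝ) ≤ t - a by linarith), hba.le]
      · rw [min_eq_right h', max_eq_left h']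
        nlinarith [mul_le_mul hδt2 hδs1 hδs0 (show (0:ℝ) ≤ b - t by linarith), hba.le]
    -- upper bound for the negative part
    have hB : (∫ s in Set.Ioo a b, (min t s - a) * (b - max t s) / (b - a) * max (-(m s)) 0) ≤
        min (t - a) (b - t) / (b - a) * max M1 M2 := by
      rcases le_total (t - a) (b - t) with hmid | hmid
      · have hδt : min (t - a) (b - t) = t - a := min_eq_left hmid
        calc (∫ s in Set.Ioo a b, (min t s - a) * (b - max t s) / (b - a) * max (-(m s)) 0)
            ≤ ∫ s in Set.Ioo a b, (t - a) / (b - a) * ((b - s) * max (-(m s)) 0) := by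
              refine setIntegral_mono_on hGn (hbp.const_mul _) measurableSet_Ioo ?_
              intro s hs
              have h0 : (0:ℝ) ≤ max (-(m s)) 0 := le_max_right _ _
              have key : (min t s - a) * (b - max t s) ≤ (t - a) * (b - s) := by
                rcases le_total t s with h' | h'
                · rw [min_eq_left h', max_eq_right h']
                · rw [min_eq_right h', max_eq_left h']
                  nlinarith
              calc (min t s - a) * (b - max t s) / (b - a) * max (-(m s)) 0
                  = (min t s - a) * (b - max t s) * max (-(m s)) 0 / (b - a) := by ring
                _ ≤ (t - a) * (b - s) * max (-(m s)) 0 / (b - a) := by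
                    apply div_le_div_of_nonneg_right ?_ hba.le
                    exact mul_le_mul_of_nonneg_right key h0
                _ = (t - a) / (b - a) * ((b - s) * max (-(m s)) 0) := by ring
          _ = (t - a) / (b - a) * M2 := by rw [integral_const_mul, hM2]
          _ ≤ min (t - a) (b - t) / (b - a) * max M1 M2 := by
              rw [hδt]
              exact mul_le_mul_of_nonneg_left (le_max_right _ _)
                (div_nonneg (by linarith) hba.le)
      · have hδt : min (t - a) (b - t) = b - t := min_eq_right hmid
        calc (∫ s in Set.Ioo a b, (min t s - a) * (b - max t s) / (b - a) * max (-(m s)) 0)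
            ≤ ∫ s in Set.Ioo a b, (b - t) / (b - a) * ((s - a) * max (-(m s)) 0) := by
              refine setIntegral_mono_on hGn (hap.const_mul _) measurableSet_Ioo ?_
              intro s hs
              have h0 : (0:ℝ) ≤ max (-(m s)) 0 := le_max_right _ _
              have key : (min t s - a) * (b - max t s) ≤ (b - t) * (s - a) := by
                rcases le_total t s with h' | h'
                · rw [min_eq_left h', max_eq_right h']
                  nlinarith
                · rw [min_eq_right h', max_eq_left h']
                  nlinarith
              calc (min t s - a) * (b - max t s) / (b - a) * max (-(m s)) 0
                  = (min t s - a) * (b - max t s) * max (-(m s)) 0 / (b - a) := by ring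
                _ ≤ (b - t) * (s - a) * max (-(m s)) 0 / (b - a) := by
                    apply div_le_div_of_nonneg_right ?_ hba.le
                    exact mul_le_mul_of_nonneg_right key h0
                _ = (b - t) / (b - a) * ((s - a) * max (-(m s)) 0) := by ring
          _ = (b - t) / (b - a) * M1 := by rw [integral_const_mul, hM1]
          _ ≤ min (t - a) (b - t) / (b - a) * max M1 M2 := by
              rw [hδt]
              exact mul_le_mul_of_nonneg_left (le_max_left _ _)
                (div_nonneg (by linarith) hba.le)
    have hceq : c * min (t - a) (b - t) =
        min (t - a) (b - t) / (b - a) * Ipos - min (t - a) (b - t) / (b - a) * max M1 M2 := by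
      rw [hc]; field_simp
    rw [hceq, hsplit]
    linarith
  refine ⟨?_, c, hcpos, hkey⟩
  intro t ht
  have hδt : 0 < min (t - a) (b - t) := lt_min (by linarith [ht.1]) (by linarith [ht.2])
  have := hkey t ⟨ht.1.le, ht.2.le⟩
  nlinarith
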